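/- Let n be a positive integer, let K ⊆ ℝⁿ be a convex set with √n·B₂ⁿ ⊆ K, let ν be a Borel probability measure on ℝⁿ supported on K, and let μ = γ_n * ν be the convolution of the standard Gaussian measure γ_n on ℝⁿ with ν. Then μ(4K) ≥ γ_n(2√n·B₂ⁿ) ≥ 1/2. -/

import Mathlib

open MeasureTheory Metric Set
open scoped Pointwise
open scoped MeasureTheory
open scoped ENNReal

/-- The standard Gaussian probability measure `γ_n` on `ℝⁿ`
(with density `(2π)^{−n/2} e^{−|x|²/2}`). -/
noncomputable def gaussianMeasure (n : ℕ) : Measure (EuclideanSpace ℝ (Fin n)) :=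
  Measure.map (MeasurableEquiv.toLp 2 (Fin n → ℝ))
    (Measure.pi fun _ => ProbabilityTheory.gaussianReal 0 1)

open Real ProbabilityTheory in
lemma secondMoment_gaussianReal_le :
    ∫⁻ x, ENNReal.ofReal (x ^ 2) ∂(gaussianReal 0 1) ≤ 2 := by
  rw [gaussianReal_of_var_ne_zero 0 one_ne_zero,
    lintegral_withDensity_eq_lintegral_mul _ (measurable_gaussianPDF 0 1)
      (by measurability)]
  have key : ∀ x : ℝ, (gaussianPDF 0 1 * fun x => ENNReal.ofReal (x ^ 2)) x ≤
      ENNReal.ofReal ((Real.sqrt (2 * π))⁻¹ * (3 / Real.exp 1) * Real.exp (-(6⁻¹) * x ^ 2)) := by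
    intro x
    simp only [Pi.mul_apply, gaussianPDF, gaussianPDFReal]
    rw [← ENNReal.ofReal_mul (by positivity)]
    apply ENNReal.ofReal_le_ofReal
    push_cast
    have h1 : x ^ 2 * Real.exp (-(3⁻¹) * x ^ 2) ≤ 3 / Real.exp 1 := by
      have h2 : x ^ 2 / 3 ≤ Real.exp (x ^ 2 / 3 - 1) := by
        linarith [Real.add_one_le_exp (x ^ 2 / 3 - 1)]
      have h3 := mul_le_mul_of_nonneg_right h2 (Real.exp_pos (-(3⁻¹) * x ^ 2)).le
      rw [← Real.exp_add, show x ^ 2 / 3 - 1 + -(3⁻¹) * x ^ 2 = -1 by ring,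
        Real.exp_neg] at h3
      rw [div_eq_mul_inv]
      linarith
    have h4 : Real.exp (-(x - 0) ^ 2 / (2 * 1)) * x ^ 2 ≤
        3 / Real.exp 1 * Real.exp (-(6⁻¹) * x ^ 2) := by
      have h5 : Real.exp (-(x - 0) ^ 2 / (2 * 1)) =
          Real.exp (-(3⁻¹) * x ^ 2) * Real.exp (-(6⁻¹) * x ^ 2) := by
        rw [← Real.exp_add]; ring_nf
      rw [h5]
      calc Real.exp (-(3⁻¹) * x ^ 2) * Real.exp (-(6⁻¹) * x ^ 2) * x ^ 2
          = (x ^ 2 * Real.exp (-(3⁻¹) * x ^ 2)) * Real.exp (-(6⁻¹) * x ^ 2) := by ring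
        _ ≤ 3 / Real.exp 1 * Real.exp (-(6⁻¹) * x ^ 2) :=
            mul_le_mul_of_nonneg_right h1 (Real.exp_pos _).le
    calc (Real.sqrt (2 * π * 1))⁻¹ * Real.exp (-(x - 0) ^ 2 / (2 * 1)) * x ^ 2
        = (Real.sqrt (2 * π))⁻¹ * (Real.exp (-(x - 0) ^ 2 / (2 * 1)) * x ^ 2) := by
          rw [mul_one]; ring
      _ ≤ (Real.sqrt (2 * π))⁻¹ * (3 / Real.exp 1 * Real.exp (-(6⁻¹) * x ^ 2)) := by
          apply mul_le_mul_of_nonneg_left h4 (by positivity)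
      _ = (Real.sqrt (2 * π))⁻¹ * (3 / Real.exp 1) * Real.exp (-(6⁻¹) * x ^ 2) := by ring
  calc ∫⁻ x, (gaussianPDF 0 1 * fun x => ENNReal.ofReal (x ^ 2)) x
      ≤ ∫⁻ x, ENNReal.ofReal
          ((Real.sqrt (2 * π))⁻¹ * (3 / Real.exp 1) * Real.exp (-(6⁻¹) * x ^ 2)) :=
        lintegral_mono key
    _ = ENNReal.ofReal
          (∫ x, (Real.sqrt (2 * π))⁻¹ * (3 / Real.exp 1) * Real.exp (-(6⁻¹) * x ^ 2)) := by
        rw [← ofReal_integral_eq_lintegral_ofReal]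
        · exact ((integrable_exp_neg_mul_sq (by norm_num : (0:ℝ) < 6⁻¹)).const_mul _)
        · filter_upwards with x; positivity
    _ ≤ 2 := by
        rw [integral_const_mul, integral_gaussian]
        have hpi := Real.pi_gt_three
        have he := Real.exp_one_gt_d9
        have hsp : (0:ℝ) < Real.sqrt π := Real.sqrt_pos.mpr (by linarith)
        have h2 : Real.sqrt (π / 6⁻¹) = Real.sqrt 6 * Real.sqrt π := by
          rw [← Real.sqrt_mul (by norm_num)]; ring_nf
        have h3 : Real.sqrt (2 * π) = Real.sqrt 2 * Real.sqrt π := Real.sqrt_mul (by norm_num) _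
        have h6 : Real.sqrt 6 ≤ 2.45 := by
          rw [show (2.45:ℝ) = Real.sqrt (2.45 ^ 2) from (Real.sqrt_sq (by norm_num)).symm]
          exact Real.sqrt_le_sqrt (by norm_num)
        have h7 : (1.41:ℝ) ≤ Real.sqrt 2 := by
          rw [show (1.41:ℝ) = Real.sqrt (1.41 ^ 2) from (Real.sqrt_sq (by norm_num)).symm]
          exact Real.sqrt_le_sqrt (by norm_num)
        rw [h2, h3, ← ENNReal.ofReal_ofNat]
        apply ENNReal.ofReal_le_ofReal
        have heq : (Real.sqrt 2 * Real.sqrt π)⁻¹ * (3 / Real.exp 1) * (Real.sqrt 6 * Real.sqrt π)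
            = 3 * Real.sqrt 6 / (Real.sqrt 2 * Real.exp 1) := by
          field_simp
        rw [heq, div_le_iff₀ (by positivity)]
        have h8 : (1.41:ℝ) * 2.7182818283 ≤ Real.sqrt 2 * Real.exp 1 :=
          mul_le_mul h7 he.le (by norm_num) (Real.sqrt_nonneg 2)
        norm_num at h6 h8 ⊢
        have goal : 3 * Real.sqrt 6 ≤ 2 * (Real.sqrt 2 * Real.exp 1) := by
          linarith only [h6, h8]
        exact goal

lemma pi_gaussian_map_eval (n : ℕ) (i : Fin n) :
    (Measure.pi fun _ : Fin n => ProbabilityTheory.gaussianReal 0 1).map (fun y => y i)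
      = ProbabilityTheory.gaussianReal 0 1 := by
  ext s hs
  rw [Measure.map_apply (measurable_pi_apply i) hs]
  have : (fun y : Fin n → ℝ => y i) ⁻¹' s
      = Set.pi Set.univ (fun j => if j = i then s else Set.univ) := by
    ext y; simp only [Set.mem_preimage, Set.mem_pi, Set.mem_univ, forall_true_left]
    constructor
    · intro h j; by_cases hj : j = i <;> simp [hj, h]
    · intro h; have := h i; simpa using this
  rw [this, Measure.pi_pi, Fintype.prod_eq_single i (fun j hj => by simp [hj, measure_univ])]
  simp

instance gaussianMeasure_prob (n : ℕ) : IsProbabilityMeasure (gaussianMeasure n) := by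
  unfold gaussianMeasure
  exact Measure.isProbabilityMeasure_map (MeasurableEquiv.measurable _).aemeasurable

lemma secondMoment_gaussianMeasure_le (n : ℕ) :
    ∫⁻ x, ENNReal.ofReal (‖x‖ ^ 2) ∂(gaussianMeasure n) ≤ (n : ℝ≥0∞) * 2 := by
  unfold gaussianMeasure
  rw [lintegral_map (by measurability) (MeasurableEquiv.measurable _)]
  have hcongr : ∀ y : Fin n → ℝ,
      ENNReal.ofReal (‖(MeasurableEquiv.toLp 2 (Fin n → ℝ)) y‖ ^ 2)
        = ∑ i, ENNReal.ofReal ((y i) ^ 2) := by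
    intro y
    rw [EuclideanSpace.norm_eq, Real.sq_sqrt (by positivity),
      ENNReal.ofReal_sum_of_nonneg (fun i _ => sq_nonneg _)]
    congr 1
    ext i
    rw [show ((MeasurableEquiv.toLp 2 (Fin n → ℝ)) y) i = y i from rfl,
      Real.norm_eq_abs, sq_abs]
  rw [lintegral_congr hcongr,
    lintegral_finset_sum _ (fun i _ => by measurability)]
  have hi : ∀ i : Fin n,
      ∫⁻ y : Fin n → ℝ, ENNReal.ofReal ((y i) ^ 2)
          ∂(Measure.pi fun _ => ProbabilityTheory.gaussianReal 0 1) ≤ 2 := by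
    intro i
    have hmap := lintegral_map (μ := Measure.pi fun _ : Fin n => ProbabilityTheory.gaussianReal 0 1)
      (g := fun y : Fin n → ℝ => y i) (f := fun t : ℝ => ENNReal.ofReal (t ^ 2))
      (by measurability) (measurable_pi_apply i)
    rw [pi_gaussian_map_eval n i] at hmap
    rw [← hmap]
    exact secondMoment_gaussianReal_le
  calc (∑ i : Fin n, ∫⁻ y : Fin n → ℝ, ENNReal.ofReal ((y i) ^ 2)
        ∂(Measure.pi fun _ => ProbabilityTheory.gaussianReal 0 1))
      ≤ ∑ _i : Fin n, (2 : ℝ≥0∞) := Finset.sum_le_sum fun i _ => hi i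
    _ = (n : ℝ≥0∞) * 2 := by simp [mul_comm]

/-- if `√n B₂ⁿ ⊆ K` with `K` convex, `ν` is a probability measure
supported on `K`, and `μ = γ_n ∗ ν`, then `μ(4K) ≥ γ_n(2√n B₂ⁿ) ≥ 1/2`. -/
theorem convolution_measure_of_dilate_ge :
    ∀ n : ℕ, 0 < n → ∀ K : Set (EuclideanSpace ℝ (Fin n)), Convex ℝ K →
      closedBall 0 (Real.sqrt n) ⊆ K →
      ∀ ν : Measure (EuclideanSpace ℝ (Fin n)), IsProbabilityMeasure ν → ν Kᶜ = 0 →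
        gaussianMeasure n (closedBall 0 (2 * Real.sqrt n)) ≤
            ((gaussianMeasure n) ∗ ν) ((4 : ℝ) • K) ∧
          ENNReal.ofReal (1 / 2) ≤
            gaussianMeasure n (closedBall 0 (2 * Real.sqrt n)) := by
  intro n hn K hK hball ν hν hνK
  set γ := gaussianMeasure n with hγ
  set B := closedBall (0 : EuclideanSpace ℝ (Fin n)) (2 * Real.sqrt n) with hB
  have h0K : (0 : EuclideanSpace ℝ (Fin n)) ∈ K :=
    hball (mem_closedBall_self (Real.sqrt_nonneg n))
  constructor
  · -- part 1
    set T := (toMeasurable ν Kᶜ)ᶜ with hT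
    have hTm : MeasurableSet T := (measurableSet_toMeasurable ν Kᶜ).compl
    have hTK : T ⊆ K := by
      intro x hx
      by_contra hxK
      exact hx (subset_toMeasurable _ _ hxK)
    have hTfull : ν T = 1 := by
      rw [hT, measure_compl (measurableSet_toMeasurable _ _) (measure_ne_top _ _),
        measure_toMeasurable, hνK, measure_univ, tsub_zero]
    have hsub : B ×ˢ T ⊆ (fun p : EuclideanSpace ℝ (Fin n) × EuclideanSpace ℝ (Fin n)
        => p.1 + p.2) ⁻¹' ((4 : ℝ) • K) := by
      rintro ⟨z, y⟩ ⟨hz, hy⟩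
      have ha : (2⁻¹ : ℝ) • z ∈ K := by
        apply hball
        rw [mem_closedBall_zero_iff, norm_smul]
        rw [hB, mem_closedBall_zero_iff] at hz
        have h2 : ‖(2⁻¹ : ℝ)‖ = 2⁻¹ := by norm_num
        rw [h2]
        linarith
      have hc : (2⁻¹ : ℝ) • y + (2⁻¹ : ℝ) • (0 : EuclideanSpace ℝ (Fin n)) ∈ K :=
        hK (hTK hy) h0K (by norm_num) (by norm_num) (by norm_num)
      have hx : (2⁻¹ : ℝ) • ((2⁻¹ : ℝ) • z)
          + (2⁻¹ : ℝ) • ((2⁻¹ : ℝ) • y + (2⁻¹ : ℝ) • (0 : EuclideanSpace ℝ (Fin n))) ∈ K :=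
        hK ha hc (by norm_num) (by norm_num) (by norm_num)
      refine Set.mem_smul_set.mpr ⟨_, hx, ?_⟩
      show (4 : ℝ) • _ = z + y
      module
    haveI : SFinite ν := inferInstance
    calc γ B = γ B * ν T := by rw [hTfull, mul_one]
      _ = (γ.prod ν) (B ×ˢ T) := (Measure.prod_prod _ _).symm
      _ ≤ (γ.prod ν) ((fun p : EuclideanSpace ℝ (Fin n) × EuclideanSpace ℝ (Fin n)
            => p.1 + p.2) ⁻¹' ((4 : ℝ) • K)) := measure_mono hsub
      _ ≤ (γ ∗ ν) ((4 : ℝ) • K) :=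
          Measure.le_map_apply (measurable_fst.add measurable_snd).aemeasurable _
  · -- part 2
    have hmom := secondMoment_gaussianMeasure_le n
    have hmeas : AEMeasurable (fun x : EuclideanSpace ℝ (Fin n) => ENNReal.ofReal (‖x‖ ^ 2)) γ :=
      (Measurable.ennreal_ofReal (by fun_prop)).aemeasurable
    have hmarkov := mul_meas_ge_le_lintegral₀ hmeas (4 * (n : ℝ≥0∞))
    have hsubc : Bᶜ ⊆ {x : EuclideanSpace ℝ (Fin n)
        | 4 * (n : ℝ≥0∞) ≤ ENNReal.ofReal (‖x‖ ^ 2)} := by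
      intro x hx
      rw [hB, mem_compl_iff, mem_closedBall_zero_iff, not_le] at hx
      have h1 : (4 : ℝ) * n ≤ ‖x‖ ^ 2 := by
        have : (2 * Real.sqrt n) ^ 2 ≤ ‖x‖ ^ 2 :=
          pow_le_pow_left₀ (by positivity) hx.le 2
        rw [mul_pow, Real.sq_sqrt (Nat.cast_nonneg n)] at this
        linarith
      have h2 : (4 * (n : ℝ≥0∞)) = ENNReal.ofReal ((4 : ℝ) * n) := by
        rw [ENNReal.ofReal_mul (by norm_num), ENNReal.ofReal_ofNat, ENNReal.ofReal_natCast]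
      rw [mem_setOf_eq, h2]
      exact ENNReal.ofReal_le_ofReal h1
    have hcompl : γ Bᶜ ≤ 1 / 2 := by
      have h1 : 4 * (n : ℝ≥0∞) * γ Bᶜ ≤ 4 * (n : ℝ≥0∞) * (1 / 2) := by
        calc 4 * (n : ℝ≥0∞) * γ Bᶜ
            ≤ 4 * (n : ℝ≥0∞) * γ {x : EuclideanSpace ℝ (Fin n)
                | 4 * (n : ℝ≥0∞) ≤ ENNReal.ofReal (‖x‖ ^ 2)} := by
              exact mul_le_mul_right (measure_mono hsubc) _
          _ ≤ (n : ℝ≥0∞) * 2 := hmarkov.trans hmom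
          _ = 4 * (n : ℝ≥0∞) * (1 / 2) := by
              rw [mul_comm (4 : ℝ≥0∞), mul_assoc]
              congr 1
              rw [one_div, show (4 : ℝ≥0∞) = 2 * 2 by norm_num, mul_assoc,
                ENNReal.mul_inv_cancel two_ne_zero ENNReal.ofNat_ne_top, mul_one]
      have hn0 : (4 * (n : ℝ≥0∞)) ≠ 0 :=
        mul_ne_zero (by norm_num) (Nat.cast_ne_zero.mpr hn.ne')
      have hnt : (4 * (n : ℝ≥0∞)) ≠ ⊤ := by
        simp [ENNReal.mul_ne_top, ENNReal.natCast_ne_top]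
      exact (ENNReal.mul_le_mul_iff_right hn0 hnt).mp h1
    have hsum : (1 : ℝ≥0∞) ≤ γ B + γ Bᶜ := by
      calc (1 : ℝ≥0∞) = γ univ := measure_univ.symm
        _ = γ (B ∪ Bᶜ) := by rw [union_compl_self]
        _ ≤ γ B + γ Bᶜ := measure_union_le _ _
    have hhalf : ENNReal.ofReal (1 / 2) = 2⁻¹ := by
      rw [one_div, ENNReal.ofReal_inv_of_pos (by norm_num), ENNReal.ofReal_ofNat]
    rw [hhalf, ← ENNReal.one_sub_inv_two]
    refine tsub_le_iff_right.mpr ?_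
    calc (1 : ℝ≥0∞) ≤ γ B + γ Bᶜ := hsum
      _ ≤ γ B + 2⁻¹ := by
          gcongr
          rw [one_div] at hcompl
          exact hcompl
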